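/- Let Q(x) = x(x−r)(x−1)(x−t₁)(x−t₂) with 0 ≤ r ≤ 1 and 3 ≤ t₁ ≤ t₂, and let ξ₁ ≤ ξ₂ ≤ ξ₃ ≤ ξ₄ be the roots of Q′ counted with multiplicity. Then ξ₃ − ξ₂ > ξ₂ − ξ₁. -/

import Mathlib

set_option maxHeartbeats 2000000 in
/-- For `Q(x) = x(x-r)(x-1)(x-t₁)(x-t₂)` with `0 ≤ r ≤ 1` and `3 ≤ t₁ ≤ t₂`, the roots of `Q'` satisfy `ξ₃ - ξ₂ > ξ₂ - ξ₁`. -/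
theorem Q_family_xi3_gt
    (r t₁ t₂ : ℝ) (hr0 : 0 ≤ r) (hr1 : r ≤ 1) (ht₁ : 3 ≤ t₁) (ht : t₁ ≤ t₂)
    (ξ₁ ξ₂ ξ₃ ξ₄ : ℝ) (hξ12 : ξ₁ ≤ ξ₂) (hξ23 : ξ₂ ≤ ξ₃) (hξ34 : ξ₃ ≤ ξ₄)
    (hder : ∀ x : ℝ,
      deriv (fun t : ℝ => t * (t - r) * (t - 1) * (t - t₁) * (t - t₂)) x
        = 5 * (x - ξ₁) * (x - ξ₂) * (x - ξ₃) * (x - ξ₄)) :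
    ξ₃ - ξ₂ > ξ₂ - ξ₁ := by
  have key : ∀ x : ℝ, (x-r)*(x-1)*(x-t₁)*(x-t₂) + x*(x-1)*(x-t₁)*(x-t₂) + x*(x-r)*(x-t₁)*(x-t₂)
      + x*(x-r)*(x-1)*(x-t₂) + x*(x-r)*(x-1)*(x-t₁)
      = 5*(x-ξ₁)*(x-ξ₂)*(x-ξ₃)*(x-ξ₄) := by
    intro x
    have h := (((((hasDerivAt_id' (x := x)).mul ((hasDerivAt_id' (x := x)).sub_const r)).mul
        ((hasDerivAt_id' (x := x)).sub_const 1)).mul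
        ((hasDerivAt_id' (x := x)).sub_const t₁)).mul
        ((hasDerivAt_id' (x := x)).sub_const t₂))
    have hd := h.deriv
    have h2 := hd.symm.trans (hder x)
    simp only [Pi.mul_apply] at h2
    linear_combination h2
  have ht₂3 : (3:ℝ) ≤ t₂ := le_trans ht₁ ht
  -- ξ₁ ≥ 0
  have hξ₁0 : 0 ≤ ξ₁ := by
    by_contra h
    push_neg at h
    have e := key ξ₁
    have a0 : 0 < -ξ₁ := by linarith
    have a1 : 0 < r - ξ₁ := by linarith
    have a2 : 0 < 1 - ξ₁ := by linarith
    have a3 : 0 < t₁ - ξ₁ := by linarith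
    have a4 : 0 < t₂ - ξ₁ := by linarith
    nlinarith [mul_pos (mul_pos a1 a2) (mul_pos a3 a4),
      mul_pos (mul_pos a0 a2) (mul_pos a3 a4),
      mul_pos (mul_pos a0 a1) (mul_pos a3 a4),
      mul_pos (mul_pos a0 a1) (mul_pos a2 a4),
      mul_pos (mul_pos a0 a1) (mul_pos a2 a3)]
  -- ξ₁ ≤ r
  have hξ₁r : ξ₁ ≤ r := by
    by_contra h
    push_neg at h
    have e : r*(r-1)*(r-t₁)*(r-t₂) = 5*(r-ξ₁)*(r-ξ₂)*(r-ξ₃)*(r-ξ₄) := by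
      linear_combination key r
    have a1 : 0 < ξ₁ - r := by linarith
    have a2 : 0 < ξ₂ - r := by linarith
    have a3 : 0 < ξ₃ - r := by linarith
    have a4 : 0 < ξ₄ - r := by linarith
    have hS : r*(r-1)*(r-t₁)*(r-t₂) ≤ 0 := by
      nlinarith [mul_nonneg (mul_nonneg (mul_nonneg hr0 (by linarith : (0:ℝ) ≤ 1 - r))
        (by linarith : (0:ℝ) ≤ t₁ - r)) (by linarith : (0:ℝ) ≤ t₂ - r)]
    nlinarith [mul_pos (mul_pos a1 a2) (mul_pos a3 a4)]
  -- ξ₂ ≤ (2+r)/3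
  have hξ₂A : ξ₂ ≤ (2+r)/3 := by
    rcases eq_or_lt_of_le hr1 with hr | hr
    · -- r = 1
      subst hr
      by_contra hc
      push_neg at hc
      have hc1 : 1 < ξ₂ := by linarith
      have e1 : (0:ℝ) = 5*(1-ξ₁)*(1-ξ₂)*(1-ξ₃)*(1-ξ₄) := by
        linear_combination key 1
      have hξ₁1 : ξ₁ = 1 := by
        by_contra hne
        have h1 : ξ₁ < 1 := lt_of_le_of_ne hξ₁r hne
        have b2 : 0 < ξ₂ - 1 := by linarith
        have b3 : 0 < ξ₃ - 1 := by linarith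
        have b4 : 0 < ξ₄ - 1 := by linarith
        nlinarith [mul_pos (mul_pos (by linarith : (0:ℝ) < 1 - ξ₁) b2) (mul_pos b3 b4)]
      have e2 : -(1/4)*((t₁-1/2)*(t₂-1/2)) - (1/8)*((t₁-1/2)+(t₂-1/2))
          = 5*((ξ₁-1/2)*(ξ₂-1/2))*((ξ₃-1/2)*(ξ₄-1/2)) := by
        linear_combination key (1/2)
      have c1 : (1/2:ℝ) ≤ ξ₁ - 1/2 := by rw [hξ₁1]; norm_num
      have c2 : (1/2:ℝ) ≤ ξ₂ - 1/2 := by linarith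
      have c3 : (1/2:ℝ) ≤ ξ₃ - 1/2 := by linarith
      have c4 : (1/2:ℝ) ≤ ξ₄ - 1/2 := by linarith
      have m1 : (5/2:ℝ) ≤ t₁ - 1/2 := by linarith
      have m2 : (5/2:ℝ) ≤ t₂ - 1/2 := by linarith
      have q1 : (25/4:ℝ) ≤ (t₁-1/2)*(t₂-1/2) := by nlinarith
      have p12 : (1/4:ℝ) ≤ (ξ₁-1/2)*(ξ₂-1/2) := by nlinarith
      have p34 : (1/4:ℝ) ≤ (ξ₃-1/2)*(ξ₄-1/2) := by nlinarith
      have q2 : (1/16:ℝ) ≤ (ξ₁-1/2)*(ξ₂-1/2)*((ξ₃-1/2)*(ξ₄-1/2)) := by nlinarith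
      nlinarith [e2, q1, q2, m1, m2]
    · -- r < 1
      by_contra hc
      push_neg at hc
      have e : (r*(1-r)/3) * ((t₁-(2+r)/3)*(t₂-(2+r)/3))
          + (2*(2+r)*(1-r)^2/27) * ((t₁-(2+r)/3)+(t₂-(2+r)/3))
          = 5*((2+r)/3-ξ₁)*((2+r)/3-ξ₂)*((2+r)/3-ξ₃)*((2+r)/3-ξ₄) := by
        linear_combination key ((2+r)/3)
      have hA1 : (2+r)/3 ≤ 1 := by linarith
      have hu : 0 < t₁ - (2+r)/3 := by linarith
      have hv : 0 < t₂ - (2+r)/3 := by linarith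
      have hL1 : 0 ≤ (r*(1-r)/3) * ((t₁-(2+r)/3)*(t₂-(2+r)/3)) := by
        apply mul_nonneg
        · have : 0 ≤ 1 - r := by linarith
          positivity
        · exact le_of_lt (mul_pos hu hv)
      have hL2 : 0 < (2*(2+r)*(1-r)^2/27) * ((t₁-(2+r)/3)+(t₂-(2+r)/3)) := by
        apply mul_pos
        · have h1r : 0 < 1 - r := by linarith
          positivity
        · linarith
      have b1 : 0 ≤ (2+r)/3 - ξ₁ := by linarith
      have b2 : 0 < ξ₂ - (2+r)/3 := by linarith
      have b3 : 0 < ξ₃ - (2+r)/3 := by linarith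
      have b4 : 0 < ξ₄ - (2+r)/3 := by linarith
      nlinarith [mul_nonneg (mul_nonneg b1 b2.le) (mul_pos b3 b4).le]
  -- positivity of Q' at B = (43+20r)/30
  have hBle : (43+20*r)/30 ≤ 21/10 := by linarith
  have hgpos : 0 < (3*((43+20*r)/30)^2-2*(1+r)*((43+20*r)/30)+r)*(3-(43+20*r)/30)
      - 2*(((43+20*r)/30)*((43+20*r)/30-r)*((43+20*r)/30-1)) := by
    have h1r : (0:ℝ) ≤ 1 - r := by linarith
    have hrr : r^2 ≤ r := by nlinarith
    nlinarith [mul_nonneg h1r (show (0:ℝ) ≤ 17384 + 9920*r - 1600*r^2 by nlinarith),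
      mul_nonneg hr0 h1r]
  have hCp : 0 ≤ 3*((43+20*r)/30)^2-2*(1+r)*((43+20*r)/30)+r := by nlinarith
  have hu3 : 0 ≤ t₁ - 3 := by linarith
  have hv3 : 0 ≤ t₂ - 3 := by linarith
  have huB : 0 < t₁ - (43+20*r)/30 := by linarith
  have hvB : 0 < t₂ - (43+20*r)/30 := by linarith
  have h2uv : 0 ≤ 2*((t₁-(43+20*r)/30)*(t₂-(43+20*r)/30))
      - (3-(43+20*r)/30)*((t₁-(43+20*r)/30)+(t₂-(43+20*r)/30)) := by
    nlinarith [mul_nonneg huB.le hv3, mul_nonneg hvB.le hu3]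
  have hRB : 0 < 5*((43+20*r)/30-ξ₁)*((43+20*r)/30-ξ₂)*((43+20*r)/30-ξ₃)*((43+20*r)/30-ξ₄) := by
    have e := key ((43+20*r)/30)
    nlinarith [e, mul_nonneg hCp h2uv, mul_pos hgpos (by linarith : (0:ℝ) < (t₁-(43+20*r)/30)+(t₂-(43+20*r)/30))]
  -- ξ₄ ≥ B
  have hξ₄B : (43+20*r)/30 ≤ ξ₄ := by
    by_contra h
    push_neg at h
    have e : t₁*(t₁-r)*(t₁-1)*(t₁-t₂) = 5*(t₁-ξ₁)*(t₁-ξ₂)*(t₁-ξ₃)*(t₁-ξ₄) := by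
      linear_combination key t₁
    have d1 : 0 < t₁ - ξ₁ := by linarith
    have d2 : 0 < t₁ - ξ₂ := by linarith
    have d3 : 0 < t₁ - ξ₃ := by linarith
    have d4 : 0 < t₁ - ξ₄ := by linarith
    have hS : t₁*(t₁-r)*(t₁-1)*(t₁-t₂) ≤ 0 := by
      nlinarith [mul_nonneg (mul_nonneg (mul_nonneg (by linarith : (0:ℝ) ≤ t₁)
        (by linarith : (0:ℝ) ≤ t₁ - r)) (by linarith : (0:ℝ) ≤ t₁ - 1))
        (by linarith : (0:ℝ) ≤ t₂ - t₁)]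
    nlinarith [mul_pos (mul_pos d1 d2) (mul_pos d3 d4)]
  -- ξ₃ ≥ B
  have hξ₃B : (43+20*r)/30 ≤ ξ₃ := by
    by_contra h
    push_neg at h
    have d1 : 0 < (43+20*r)/30 - ξ₁ := by linarith
    have d2 : 0 < (43+20*r)/30 - ξ₂ := by linarith
    have d3 : 0 < (43+20*r)/30 - ξ₃ := by linarith
    have d4 : 0 ≤ ξ₄ - (43+20*r)/30 := by linarith
    nlinarith [hRB, mul_nonneg (mul_pos (mul_pos d1 d2) d3).le d4]
  -- conclude
  linarith
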